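/- arXiv:0704.0229 — 3 statements merged into one kernel-verified Lean document; each statement's English description precedes it below -/
import Mathlib

section
/- Let f : ℕ → ℤ and suppose its generating function admits a positive form whose denominator contains the factor (1 − t): there are d, k ∈ ℕ, integers h_0, …, h_d with h_0 = 1 and h_i ≥ 0 for all i, and positive integers a_1, …, a_k and d_1, …, d_k, such that in ℤ⟦t⟧ one has (Σ_{n≥0} f(n) tⁿ) · (1 − t) · ∏_{j=1}^{k} (1 − t^{a_j})^{d_j} = Σ_{i=0}^{d} h_i t^i. Then f(n) ≥ 1 for every n ∈ ℕ. (This is the paper's claim that a counting function whose generating function has a positive form with some denominator exponent a_0 = 1 is strictly saturated.) -/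
open PowerSeries

/-- If `A * (1 - X^a) = B` with `a > 0` and `B` has nonnegative coefficients,
then so does `A`. -/
lemma aux_peel (A B : PowerSeries ℤ) (a : ℕ) (hapos : 0 < a)
    (hAB : A * (1 - PowerSeries.X ^ a) = B)
    (hB : ∀ n, 0 ≤ PowerSeries.coeff n B) :
    ∀ n, 0 ≤ PowerSeries.coeff n A := by
  intro n
  induction n using Nat.strong_induction_on with
  | _ n ih =>
    have hc : PowerSeries.coeff n B =
        PowerSeries.coeff n A -
          (if a ≤ n then PowerSeries.coeff (n - a) A else 0) := by
      rw [← hAB, mul_sub, mul_one, map_sub, PowerSeries.coeff_mul_X_pow']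
    by_cases hle : a ≤ n
    · rw [if_pos hle] at hc
      have h1 := hB n
      have h2 := ih (n - a) (by omega)
      omega
    · rw [if_neg hle] at hc
      have h1 := hB n
      omega

lemma aux_peel_pow (A B : PowerSeries ℤ) (a m : ℕ) (hapos : 0 < a)
    (hAB : A * (1 - PowerSeries.X ^ a) ^ m = B)
    (hB : ∀ n, 0 ≤ PowerSeries.coeff n B) :
    ∀ n, 0 ≤ PowerSeries.coeff n A := by
  induction m generalizing B with
  | zero => simpa [← hAB] using hB
  | succ m ih =>
    have : (A * (1 - PowerSeries.X ^ a) ^ m) * (1 - PowerSeries.X ^ a) = B := by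
      rw [mul_assoc, ← pow_succ]; exact hAB
    have h' := aux_peel _ _ a hapos this hB
    exact ih _ rfl h'

lemma aux_peel_prod (k : ℕ) (a e : Fin k → ℕ) (ha : ∀ j, 0 < a j)
    (A B : PowerSeries ℤ) (s : Finset (Fin k))
    (hAB : A * ∏ j ∈ s, (1 - PowerSeries.X ^ (a j)) ^ (e j) = B)
    (hB : ∀ n, 0 ≤ PowerSeries.coeff n B) :
    ∀ n, 0 ≤ PowerSeries.coeff n A := by
  induction s using Finset.induction_on generalizing A B with
  | empty => simpa [← hAB] using hB
  | @insert i s hi ih =>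
    rw [Finset.prod_insert hi] at hAB
    have : (A * (1 - PowerSeries.X ^ (a i)) ^ (e i)) *
        ∏ j ∈ s, (1 - PowerSeries.X ^ (a j)) ^ (e j) = B := by
      rw [mul_assoc]; exact hAB
    have h' := ih _ _ this hB
    exact aux_peel_pow _ _ (a i) (e i) (ha i) rfl h'

/-- If the generating function of `f : ℕ → ℤ` admits a positive form whose denominator
contains the factor `(1 - t)`, then `f n ≥ 1` for every `n`. -/
theorem stmt0 (f : ℕ → ℤ) (d k : ℕ) (h : ℕ → ℤ) (a e : Fin k → ℕ)
    (ha : ∀ j, 0 < a j) (he : ∀ j, 0 < e j)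
    (hh0 : h 0 = 1) (hh : ∀ i, i ≤ d → 0 ≤ h i)
    (hid : (PowerSeries.mk f) * (1 - PowerSeries.X) *
        ∏ j : Fin k, (1 - PowerSeries.X ^ (a j)) ^ (e j) =
      ∑ i ∈ Finset.range (d + 1), PowerSeries.C (h i) * PowerSeries.X ^ i) :
    ∀ n : ℕ, 1 ≤ f n := by
  set P : PowerSeries ℤ :=
    ∑ i ∈ Finset.range (d + 1), PowerSeries.C (h i) * PowerSeries.X ^ i with hP
  have hPcoeff : ∀ n, 0 ≤ PowerSeries.coeff n P := by
    intro n
    rw [hP, map_sum]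
    apply Finset.sum_nonneg
    intro i hi
    rw [PowerSeries.coeff_C_mul, PowerSeries.coeff_X_pow]
    split_ifs with hni
    · exact mul_nonneg (hh i (Nat.lt_succ_iff.mp (Finset.mem_range.mp hi))) zero_le_one
    · simp
  -- A := (mk f) * (1 - X) has nonnegative coefficients
  set A : PowerSeries ℤ := (PowerSeries.mk f) * (1 - PowerSeries.X) with hA
  have hAcoeff : ∀ n, 0 ≤ PowerSeries.coeff n A :=
    aux_peel_prod k a e ha A P Finset.univ hid hPcoeff
  -- coefficients of A
  have hA0 : PowerSeries.coeff 0 A = f 0 := by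
    simp [hA, mul_sub]
  have hAn : ∀ n, PowerSeries.coeff (n + 1) A = f (n + 1) - f n := by
    intro n
    have : (PowerSeries.X : PowerSeries ℤ) = PowerSeries.X ^ 1 := (pow_one _).symm
    rw [hA, mul_sub, mul_one, map_sub, this, PowerSeries.coeff_mul_X_pow']
    simp
  -- constant coefficient of A is 1
  have hconst : PowerSeries.constantCoeff A = 1 := by
    have h1 : PowerSeries.constantCoeff (A * ∏ j : Fin k,
        (1 - PowerSeries.X ^ (a j)) ^ (e j)) = PowerSeries.constantCoeff P := by
      rw [hid]
    rw [map_mul, map_prod] at h1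
    have h2 : ∀ j : Fin k, PowerSeries.constantCoeff
        ((1 - PowerSeries.X ^ (a j) : PowerSeries ℤ) ^ (e j)) = 1 := by
      intro j
      simp [zero_pow (ha j).ne']
    rw [Finset.prod_congr rfl (fun j _ => h2 j), Finset.prod_const_one, mul_one] at h1
    have h3 : PowerSeries.constantCoeff P = 1 := by
      rw [hP, map_sum, Finset.sum_eq_single 0]
      · simp [hh0]
      · intro i hi hine
        rw [map_mul, map_pow, PowerSeries.constantCoeff_X, zero_pow hine, mul_zero]
      · simp
    rw [h1, h3]
  have hf0 : f 0 = 1 := by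
    have := hconst
    rw [← PowerSeries.coeff_zero_eq_constantCoeff_apply, hA0] at this
    exact this
  intro n
  induction n with
  | zero => omega
  | succ n ih =>
    have := hAcoeff (n + 1)
    rw [hAn n] at this
    omega
end

section
/- Let a_0, …, a_k be positive integers, let h_0, …, h_D be integers with h_0 = 1 and h_i ≥ 0 for all i, and let f : ℕ → ℤ satisfy, in ℤ⟦t⟧, the identity (Σ_{n≥0} f(n) tⁿ) · ∏_{j=0}^{k} (1 − t^{a_j}) = Σ_{i=0}^{D} h_i t^i. Suppose F ∈ ℕ is such that every integer n > F can be written as n = Σ_{j=0}^{k} a_j x_j with all x_j ∈ ℕ. Then f(n) ≥ 1 for every n > D + F. (This is the quantitative content of the paper's lemma bounding the saturation index of a quasipolynomial whose generating function has a positive form: the saturation index is at most D + F + 1, which is polynomial in max{a_j} and k.) -/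
open PowerSeries

private noncomputable def gg (a : ℕ) : PowerSeries ℤ :=
  PowerSeries.mk fun m => if a ∣ m then (1 : ℤ) else 0

private lemma gg_coeff (a m : ℕ) :
    PowerSeries.coeff m (gg a) = if a ∣ m then 1 else 0 := by
  simp [gg]

private lemma gg_inv (a : ℕ) (ha : 0 < a) : gg a * (1 - PowerSeries.X ^ a) = 1 := by
  ext n
  rw [mul_sub, mul_one, map_sub, PowerSeries.coeff_mul_X_pow']
  rcases Nat.eq_zero_or_pos n with rfl | hn
  · simp [gg_coeff, Nat.not_succ_le_zero, ha.ne', Nat.le_zero]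
  · rw [PowerSeries.coeff_one, if_neg hn.ne']
    by_cases hle : a ≤ n
    · rw [if_pos hle, gg_coeff, gg_coeff]
      have : a ∣ n ↔ a ∣ n - a := by
        constructor
        · intro hd; exact (Nat.dvd_sub hd dvd_rfl)
        · intro hd; have := Nat.dvd_add hd dvd_rfl; rwa [Nat.sub_add_cancel hle] at this
      by_cases hd : a ∣ n
      · rw [if_pos hd, if_pos (this.mp hd)]; ring
      · rw [if_neg hd, if_neg fun h' => hd (this.mpr h')]; ring
    · rw [if_neg hle, gg_coeff, if_neg, sub_zero]
      intro hd
      exact hle (Nat.le_of_dvd hn hd)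

set_option maxHeartbeats 1000000 in
/-- Quantitative saturation bound: if the generating function of `f` has a positive form
with denominator `∏ (1 - t^{a_j})` and `F` bounds the Frobenius number of the `a_j`,
then `f n ≥ 1` for all `n > D + F`. -/
theorem stmt2 (k D : ℕ) (a : Fin (k + 1) → ℕ) (ha : ∀ j, 0 < a j)
    (h : ℕ → ℤ) (hh0 : h 0 = 1) (hh : ∀ i, i ≤ D → 0 ≤ h i)
    (f : ℕ → ℤ)
    (hid : (PowerSeries.mk f) * ∏ j : Fin (k + 1), (1 - PowerSeries.X ^ (a j)) =
      ∑ i ∈ Finset.range (D + 1), PowerSeries.C (h i) * PowerSeries.X ^ i)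
    (F : ℕ)
    (hF : ∀ n : ℕ, F < n → ∃ x : Fin (k + 1) → ℕ, ∑ j, a j * x j = n) :
    ∀ n : ℕ, D + F < n → 1 ≤ f n := by
  set G : PowerSeries ℤ := ∏ j : Fin (k + 1), gg (a j) with hG
  have hGinv : G * ∏ j : Fin (k + 1), (1 - PowerSeries.X ^ (a j)) = 1 := by
    rw [hG, ← Finset.prod_mul_distrib]
    exact Finset.prod_eq_one fun j _ => gg_inv _ (ha j)
  -- nonnegativity of coefficients of G
  have hGnonneg : ∀ m, 0 ≤ PowerSeries.coeff m G := by
    intro m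
    rw [hG, PowerSeries.coeff_prod]
    apply Finset.sum_nonneg
    intro l _
    apply Finset.prod_nonneg
    intro i _
    rw [gg_coeff]
    split <;> norm_num
  -- coefficient ≥ 1 for n > F
  have hGpos : ∀ m, F < m → 1 ≤ PowerSeries.coeff m G := by
    intro m hm
    obtain ⟨x, hx⟩ := hF m hm
    rw [hG, PowerSeries.coeff_prod]
    set l : Fin (k + 1) →₀ ℕ := Finsupp.equivFunOnFinite.symm (fun j => a j * x j) with hl
    have hli : ∀ i, l i = a i * x i := fun i => rfl
    have hlmem : l ∈ Finset.finsuppAntidiag Finset.univ m := by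
      rw [Finset.mem_finsuppAntidiag]
      refine ⟨?_, Finset.subset_univ _⟩
      rw [Finset.sum_congr rfl (fun j _ => hli j)]
      exact hx
    have hterm : (∏ i : Fin (k + 1), PowerSeries.coeff (l i) (gg (a i))) = 1 := by
      apply Finset.prod_eq_one
      intro i _
      rw [gg_coeff, hli, if_pos ⟨x i, rfl⟩]
    refine le_trans (le_of_eq hterm.symm) (Finset.single_le_sum
      (f := fun l : Fin (k + 1) →₀ ℕ => ∏ i : Fin (k + 1), PowerSeries.coeff (l i) (gg (a i)))
      (fun l _ => Finset.prod_nonneg fun i _ => by rw [gg_coeff]; split <;> norm_num) hlmem)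
  -- f = numerator * G
  have hf : PowerSeries.mk f =
      (∑ i ∈ Finset.range (D + 1), PowerSeries.C (h i) * PowerSeries.X ^ i) * G := by
    have h1 : PowerSeries.mk f =
        PowerSeries.mk f * (G * ∏ j : Fin (k + 1), (1 - PowerSeries.X ^ (a j))) := by
      rw [hGinv, mul_one]
    rw [h1, show PowerSeries.mk f * (G * ∏ j : Fin (k + 1), (1 - PowerSeries.X ^ (a j)))
      = (PowerSeries.mk f * ∏ j : Fin (k + 1), (1 - PowerSeries.X ^ (a j))) * G from by ring,
      hid]
  intro n hn
  have : f n = PowerSeries.coeff n (PowerSeries.mk f) := by simp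
  rw [this, hf, PowerSeries.coeff_mul]
  have hmem : ((0 : ℕ), n) ∈ Finset.HasAntidiagonal.antidiagonal n := by simp
  have hterm0 : PowerSeries.coeff 0
      (∑ i ∈ Finset.range (D + 1), PowerSeries.C (h i) * PowerSeries.X ^ i) = 1 := by
    rw [map_sum]
    rw [Finset.sum_eq_single 0]
    · simp [hh0]
    · intro i _ hi
      simp [PowerSeries.coeff_X_pow, hi, Ne.symm hi]
    · simp
  have hnum : ∀ i, 0 ≤ PowerSeries.coeff i
      (∑ i ∈ Finset.range (D + 1), PowerSeries.C (h i) * PowerSeries.X ^ i) := by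
    intro i
    rw [map_sum]
    apply Finset.sum_nonneg
    intro j hj
    rw [PowerSeries.coeff_C_mul, PowerSeries.coeff_X_pow]
    by_cases hij : i = j
    · rw [if_pos hij, mul_one]
      exact hh j (Nat.lt_succ_iff.mp (Finset.mem_range.mp hj))
    · rw [if_neg hij, mul_zero]
  have h1 : (1 : ℤ) ≤ PowerSeries.coeff 0
      (∑ i ∈ Finset.range (D + 1), PowerSeries.C (h i) * PowerSeries.X ^ i) *
      PowerSeries.coeff n G := by
    rw [hterm0, one_mul]
    exact hGpos n (by omega)
  exact le_trans h1 (Finset.single_le_sum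
    (f := fun p => PowerSeries.coeff p.1
      (∑ i ∈ Finset.range (D + 1), PowerSeries.C (h i) * PowerSeries.X ^ i) *
      PowerSeries.coeff p.2 G)
    (fun p _ => mul_nonneg (hnum p.1) (hGnonneg p.2)) hmem)
end

section
/- Let M be an additive commutative monoid, R a commutative ring, and A a commutative R-algebra that is an integral domain, equipped with a grading 𝒜 : M → Submodule R A making A a graded R-algebra (so A is the internal direct sum of the 𝒜(m), 1 ∈ 𝒜(0), and 𝒜(m)·𝒜(m') ⊆ 𝒜(m + m')). Suppose A is generated as an R-algebra by finitely many nonzero homogeneous elements s_1, …, s_r with s_t ∈ 𝒜(m_t). Then the support {m ∈ M : 𝒜(m) ≠ 0} is exactly the additive submonoid of M generated by m_1, …, m_r; in particular, it is a finitely generated submonoid of M. (This is the key step in the paper's proof, following Brion–Knop, that the semigroup of weights occurring in a finitely generated multigraded invariant ring — and hence the semigroup T(H,G) of pairs of dominant weights with nonzero restriction multiplicity — is finitely generated.) -/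
/-- If a graded domain `A` is generated as an `R`-algebra by finitely many nonzero
homogeneous elements `s t ∈ 𝒜 (m t)`, then the support of the grading is exactly the
additive submonoid generated by the degrees `m t`; in particular it is finitely
generated. -/
theorem stmt9 {M : Type*} [AddCommMonoid M] [DecidableEq M]
    {R : Type*} [CommRing R]
    {A : Type*} [CommRing A] [IsDomain A] [Algebra R A]
    (𝒜 : M → Submodule R A) [GradedAlgebra 𝒜]
    (r : ℕ) (s : Fin r → A) (m : Fin r → M)
    (hmem : ∀ t, s t ∈ 𝒜 (m t)) (hne : ∀ t, s t ≠ 0)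
    (hgen : Algebra.adjoin R (Set.range s) = ⊤) :
    {μ : M | 𝒜 μ ≠ ⊥} = (AddSubmonoid.closure (Set.range m) : Set M) := by
  ext μ
  simp only [Set.mem_setOf_eq, SetLike.mem_coe]
  constructor
  · intro hμ
    -- pick a nonzero x ∈ 𝒜 μ
    obtain ⟨x, hx, hx0⟩ : ∃ x ∈ 𝒜 μ, x ≠ 0 := by
      by_contra h
      push_neg at h
      exact hμ ((Submodule.eq_bot_iff _).mpr h)
    -- every element of the multiplicative closure of range s is homogeneous of
    -- degree in the additive closure of range m
    have key : ∀ g ∈ Submonoid.closure (Set.range s),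
        ∃ d, d ∈ AddSubmonoid.closure (Set.range m) ∧ g ∈ 𝒜 d := by
      intro g hg
      induction hg using Submonoid.closure_induction with
      | mem a ha =>
          obtain ⟨t, rfl⟩ := ha
          exact ⟨m t, AddSubmonoid.subset_closure ⟨t, rfl⟩, hmem t⟩
      | one => exact ⟨0, AddSubmonoid.zero_mem _, SetLike.one_mem_graded 𝒜⟩
      | mul a b _ _ ha hb =>
          obtain ⟨d, hd, hda⟩ := ha
          obtain ⟨e, he, heb⟩ := hb
          exact ⟨d + e, AddSubmonoid.add_mem _ hd he,
            SetLike.mul_mem_graded hda heb⟩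
    -- projection onto degree μ
    have hspan : x ∈ Submodule.span R (Submonoid.closure (Set.range s) : Set A) := by
      rw [← Algebra.adjoin_eq_span, hgen]; trivial
    have hQ : ∀ y ∈ Submodule.span R (Submonoid.closure (Set.range s) : Set A),
        (DirectSum.decompose 𝒜 y μ : A) ≠ 0 → μ ∈ AddSubmonoid.closure (Set.range m) := by
      intro y hy
      induction hy using Submodule.span_induction with
      | mem a ha =>
          intro hne'
          obtain ⟨d, hd, hda⟩ := key a ha
          by_cases h : μ = d
          · exact h ▸ hd
          · exact absurd (DirectSum.decompose_of_mem_ne 𝒜 hda (Ne.symm h)) hne'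
      | zero => intro h; exact absurd (by simp) h
      | add a b _ _ ha hb =>
          intro h
          rw [DirectSum.decompose_add] at h
          by_cases h' : (DirectSum.decompose 𝒜 a μ : A) = 0
          · exact hb (fun hb' => h (by simp [h', hb', DirectSum.add_apply]))
          · exact ha h'
      | smul c a _ ha =>
          intro h
          refine ha fun h' => h ?_
          rw [DirectSum.decompose_smul, DirectSum.smul_apply]
          simp [h']
    exact hQ x hspan (by rw [DirectSum.decompose_of_mem_same 𝒜 hx]; exact hx0)
  · intro hμ
    induction hμ using AddSubmonoid.closure_induction with
    | mem a ha =>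
        obtain ⟨t, rfl⟩ := ha
        exact fun h => hne t (by simpa [h] using hmem t)
    | zero =>
        intro h
        exact one_ne_zero (α := A) (by simpa [h] using SetLike.one_mem_graded 𝒜)
    | add a b _ _ ha hb =>
        intro h
        obtain ⟨x, hx, hx0⟩ : ∃ x ∈ 𝒜 a, x ≠ 0 := by
          by_contra hc
          push_neg at hc
          exact ha ((Submodule.eq_bot_iff _).mpr hc)
        obtain ⟨y, hy, hy0⟩ : ∃ y ∈ 𝒜 b, y ≠ 0 := by
          by_contra hc
          push_neg at hc
          exact hb ((Submodule.eq_bot_iff _).mpr hc)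
        have : x * y ∈ 𝒜 (a + b) := SetLike.mul_mem_graded hx hy
        rw [h] at this
        exact mul_ne_zero hx0 hy0 (by simpa using this)
end
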